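/- For every fixed vector f ∈ ℝ³, the matrix-valued kernel ŷ ↦ M(ŷ, f) := (1/2)( ŷ⊗(ŷ×f) + (ŷ×f)⊗ŷ ) has zero mean over the unit sphere: ∫_{S²} M(ŷ, f) dσ(ŷ) = 0, where dσ is the surface measure on the unit sphere S² ⊂ ℝ³ and the integral is taken componentwise. -/

import Mathlib

open MeasureTheory

noncomputable section

/-- The cross product on `ℝ³`. -/
def cross3 (a b : Fin 3 → ℝ) : Fin 3 → ℝ :=
  ![a 1 * b 2 - a 2 * b 1, a 2 * b 0 - a 0 * b 2, a 0 * b 1 - a 1 * b 0]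

/-- The symmetric matrix kernel `M(ŷ, f) = (1/2)(ŷ⊗(ŷ×f) + (ŷ×f)⊗ŷ)`. -/
def Mker (yhat : Fin 3 → ℝ) (f : Fin 3 → ℝ) : Matrix (Fin 3) (Fin 3) ℝ :=
  fun i j => (1 / 2) * (yhat i * cross3 yhat f j + cross3 yhat f i * yhat j)

open Metric Set
open scoped Pointwise


abbrev E3 := EuclideanSpace ℝ (Fin 3)

/-- The measurable equivalence of the unit sphere induced by a linear isometry. -/
def sphereMapE (e : E3 ≃ₗᵢ[ℝ] E3) : sphere (0:E3) 1 ≃ᵐ sphere (0:E3) 1 where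
  toFun y := ⟨e y, by
    rw [mem_sphere_zero_iff_norm, e.norm_map, ← mem_sphere_zero_iff_norm]; exact y.2⟩
  invFun y := ⟨e.symm y, by
    rw [mem_sphere_zero_iff_norm, e.symm.norm_map, ← mem_sphere_zero_iff_norm]; exact y.2⟩
  left_inv y := by ext; simp
  right_inv y := by ext; simp
  measurable_toFun := Continuous.measurable <| by
    exact ((e.continuous.comp continuous_subtype_val).subtype_mk _)
  measurable_invFun := Continuous.measurable <| by
    exact ((e.symm.continuous.comp continuous_subtype_val).subtype_mk _)

lemma map_sphereMapE (e : E3 ≃ₗᵢ[ℝ] E3) :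
    Measure.map (sphereMapE e) (volume : Measure E3).toSphere
      = (volume : Measure E3).toSphere := by
  ext s hs
  rw [MeasurableEquiv.map_apply, Measure.toSphere_apply' _ ((sphereMapE e).measurable hs),
    Measure.toSphere_apply' _ hs]
  congr 1
  have h1 : (Subtype.val '' ((sphereMapE e) ⁻¹' s)) = ⇑e.symm '' (Subtype.val '' s) := by
    ext x
    constructor
    · rintro ⟨y, hy, rfl⟩
      exact ⟨(sphereMapE e y : E3), ⟨sphereMapE e y, hy, rfl⟩, by simp [sphereMapE]⟩
    · rintro ⟨w, ⟨z, hz, rfl⟩, rfl⟩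
      refine ⟨(sphereMapE e).symm z, ?_, rfl⟩
      show sphereMapE e ((sphereMapE e).symm z) ∈ s
      simpa using hz
  rw [h1]
  have h2 : Ioo (0:ℝ) 1 • (⇑e.symm '' (Subtype.val '' s))
      = ⇑e.symm '' (Ioo (0:ℝ) 1 • (Subtype.val '' s)) := by
    ext x
    constructor
    · rintro ⟨r, hr, _, ⟨a, ha, rfl⟩, rfl⟩
      exact ⟨r • a, ⟨r, hr, a, ha, rfl⟩, by simp⟩
    · rintro ⟨w, ⟨r, hr, a, ha, rfl⟩, rfl⟩
      exact ⟨r, hr, e.symm a, ⟨a, ha, rfl⟩, by simp⟩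
  rw [h2]
  have h3 : ⇑e.symm '' (Ioo (0:ℝ) 1 • (Subtype.val '' s))
      = ⇑e ⁻¹' (Ioo (0:ℝ) 1 • (Subtype.val '' s)) := by
    ext x
    constructor
    · rintro ⟨b, hb, rfl⟩; simpa using hb
    · intro hx; exact ⟨e x, hx, by simp⟩
  rw [h3]
  have h4 : ⇑e ⁻¹' (Ioo (0:ℝ) 1 • (Subtype.val '' s))
      = ⇑(e.toHomeomorph.toMeasurableEquiv) ⁻¹' (Ioo (0:ℝ) 1 • (Subtype.val '' s)) := rfl
  rw [h4, ← MeasurableEquiv.map_apply e.toHomeomorph.toMeasurableEquiv]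
  congr 1
  have h5 : ⇑(e.toHomeomorph.toMeasurableEquiv) = ⇑e := rfl
  rw [show Measure.map ⇑(e.toHomeomorph.toMeasurableEquiv) (volume : Measure E3)
      = Measure.map (⇑e) volume from by rw [h5]]
  exact e.measurePreserving.map_eq

lemma int_inv (e : E3 ≃ₗᵢ[ℝ] E3) (g : sphere (0:E3) 1 → ℝ) :
    ∫ y, g y ∂(volume : Measure E3).toSphere
      = ∫ y, g (sphereMapE e y) ∂(volume : Measure E3).toSphere := by
  conv_lhs => rw [← map_sphereMapE e]
  exact MeasureTheory.integral_map_equiv (sphereMapE e) g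

/-- Negation of one coordinate as a linear isometry of `ℝ³`. -/
def eneg (a : Fin 3) : E3 ≃ₗᵢ[ℝ] E3 :=
  LinearIsometryEquiv.piLpCongrRight 2
    (fun i => if i = a then LinearIsometryEquiv.neg ℝ else LinearIsometryEquiv.refl ℝ ℝ)

lemma eneg_apply (a k : Fin 3) (x : E3) :
    eneg a x k = if k = a then -(x k) else x k := by
  simp only [eneg, LinearIsometryEquiv.piLpCongrRight_apply]
  by_cases h : k = a <;> simp [h]

/-- Swap of two coordinates as a linear isometry of `ℝ³`. -/
def eswap (a b : Fin 3) : E3 ≃ₗᵢ[ℝ] E3 :=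
  LinearIsometryEquiv.piLpCongrLeft 2 ℝ ℝ (Equiv.swap a b)

lemma eswap_apply (a b k : Fin 3) (x : E3) :
    eswap a b x k = x (Equiv.swap a b k) := by
  simp [eswap, Equiv.piCongrLeft'_apply, Equiv.symm_swap]

lemma coord_continuous (a : Fin 3) :
    Continuous (fun y : sphere (0:E3) 1 => (y : E3) a) :=
  (EuclideanSpace.proj a).continuous.comp continuous_subtype_val

lemma integ (a b : Fin 3) :
    Integrable (fun y : sphere (0:E3) 1 => (y : E3) a * (y : E3) b)
      (volume : Measure E3).toSphere := by
  have h := (((coord_continuous a).mul (coord_continuous b)).continuousOn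
    (s := Set.univ)).integrableOn_compact
    (μ := (volume : Measure E3).toSphere) isCompact_univ
  rwa [integrableOn_univ] at h

lemma J_offdiag (a b : Fin 3) (hab : a ≠ b) :
    ∫ y : sphere (0:E3) 1, (y : E3) a * (y : E3) b
      ∂(volume : Measure E3).toSphere = 0 := by
  have h := int_inv (eneg a) (fun y => (y : E3) a * (y : E3) b)
  have h2 : (fun y : sphere (0:E3) 1 =>
      ((sphereMapE (eneg a) y : E3)) a * ((sphereMapE (eneg a) y : E3)) b)
      = fun y : sphere (0:E3) 1 => -((y : E3) a * (y : E3) b) := by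
    funext y
    have ha : ((sphereMapE (eneg a) y : E3)) a = -((y : E3) a) := by
      show eneg a (y : E3) a = _
      simp [eneg_apply]
    have hb : ((sphereMapE (eneg a) y : E3)) b = (y : E3) b := by
      show eneg a (y : E3) b = _
      simp [eneg_apply, hab.symm]
    rw [ha, hb]; ring
  rw [h2] at h
  rw [integral_neg] at h
  linarith

lemma J_diag (a b : Fin 3) :
    ∫ y : sphere (0:E3) 1, (y : E3) a * (y : E3) a ∂(volume : Measure E3).toSphere
      = ∫ y : sphere (0:E3) 1, (y : E3) b * (y : E3) b ∂(volume : Measure E3).toSphere := by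
  have h := int_inv (eswap a b) (fun y => (y : E3) a * (y : E3) a)
  have h2 : (fun y : sphere (0:E3) 1 =>
      ((sphereMapE (eswap a b) y : E3)) a * ((sphereMapE (eswap a b) y : E3)) a)
      = fun y : sphere (0:E3) 1 => (y : E3) b * (y : E3) b := by
    funext y
    have ha : ((sphereMapE (eswap a b) y : E3)) a = (y : E3) b := by
      show eswap a b (y : E3) a = _
      rw [eswap_apply, Equiv.swap_apply_left]
    rw [ha]
  rw [h2] at h
  exact h

lemma integral_quad (c00 c01 c02 c11 c12 c22 : ℝ) :
    ∫ y : sphere (0:E3) 1,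
        (c00 * ((y : E3) 0 * (y : E3) 0) + c01 * ((y : E3) 0 * (y : E3) 1)
          + c02 * ((y : E3) 0 * (y : E3) 2) + c11 * ((y : E3) 1 * (y : E3) 1)
          + c12 * ((y : E3) 1 * (y : E3) 2) + c22 * ((y : E3) 2 * (y : E3) 2))
        ∂(volume : Measure E3).toSphere
      = (c00 + c11 + c22)
        * ∫ y : sphere (0:E3) 1, (y : E3) 0 * (y : E3) 0 ∂(volume : Measure E3).toSphere := by
  have i00 := (integ 0 0).const_mul c00
  have i01 := (integ 0 1).const_mul c01
  have i02 := (integ 0 2).const_mul c02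
  have i11 := (integ 1 1).const_mul c11
  have i12 := (integ 1 2).const_mul c12
  have i22 := (integ 2 2).const_mul c22
  have p2 : Integrable (fun y : sphere (0:E3) 1 =>
      c00 * ((y : E3) 0 * (y : E3) 0) + c01 * ((y : E3) 0 * (y : E3) 1))
      (volume : Measure E3).toSphere := i00.add i01
  have p3 : Integrable (fun y : sphere (0:E3) 1 =>
      c00 * ((y : E3) 0 * (y : E3) 0) + c01 * ((y : E3) 0 * (y : E3) 1)
        + c02 * ((y : E3) 0 * (y : E3) 2)) (volume : Measure E3).toSphere := p2.add i02
  have p4 : Integrable (fun y : sphere (0:E3) 1 =>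
      c00 * ((y : E3) 0 * (y : E3) 0) + c01 * ((y : E3) 0 * (y : E3) 1)
        + c02 * ((y : E3) 0 * (y : E3) 2) + c11 * ((y : E3) 1 * (y : E3) 1))
      (volume : Measure E3).toSphere := p3.add i11
  have p5 : Integrable (fun y : sphere (0:E3) 1 =>
      c00 * ((y : E3) 0 * (y : E3) 0) + c01 * ((y : E3) 0 * (y : E3) 1)
        + c02 * ((y : E3) 0 * (y : E3) 2) + c11 * ((y : E3) 1 * (y : E3) 1)
        + c12 * ((y : E3) 1 * (y : E3) 2)) (volume : Measure E3).toSphere := p4.add i12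
  rw [integral_add p5 i22, integral_add p4 i12, integral_add p3 i11, integral_add p2 i02,
    integral_add i00 i01]
  rw [integral_const_mul, integral_const_mul, integral_const_mul, integral_const_mul,
    integral_const_mul, integral_const_mul,
    J_offdiag 0 1 (by decide), J_offdiag 0 2 (by decide), J_offdiag 1 2 (by decide),
    J_diag 1 0, J_diag 2 0]
  ring

/-- For every fixed `f ∈ ℝ³`, the matrix-valued kernel
`ŷ ↦ M(ŷ, f) = (1/2)(ŷ⊗(ŷ×f) + (ŷ×f)⊗ŷ)` has zero mean over the unit sphere
`S² ⊂ ℝ³` with respect to the surface measure (componentwise). -/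
theorem M_kernel_zero_mean_on_sphere (f : EuclideanSpace ℝ (Fin 3)) :
    ∀ i j : Fin 3,
      ∫ y : Metric.sphere (0 : EuclideanSpace ℝ (Fin 3)) 1,
          Mker (fun k => (y : EuclideanSpace ℝ (Fin 3)) k) (fun k => f k) i j
          ∂((volume : Measure (EuclideanSpace ℝ (Fin 3))).toSphere) = 0 := by
  intro i j
  fin_cases i <;> fin_cases j
  · show ∫ y : sphere (0:E3) 1,
        Mker (fun k => (y : E3) k) (fun k => f k) 0 0
        ∂(volume : Measure E3).toSphere = 0
    rw [show (fun y : sphere (0:E3) 1 => Mker (fun k => (y : E3) k) (fun k => f k) 0 0)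
        = (fun y : sphere (0:E3) 1 =>
          ((0:ℝ)) * ((y : E3) 0 * (y : E3) 0) + (f 2) * ((y : E3) 0 * (y : E3) 1)
            + (-f 1) * ((y : E3) 0 * (y : E3) 2) + (0) * ((y : E3) 1 * (y : E3) 1)
            + (0) * ((y : E3) 1 * (y : E3) 2) + (0) * ((y : E3) 2 * (y : E3) 2)) from
      funext fun y => by simp [Mker, cross3]; ring, integral_quad]
    ring
  · show ∫ y : sphere (0:E3) 1,
        Mker (fun k => (y : E3) k) (fun k => f k) 0 1
        ∂(volume : Measure E3).toSphere = 0
    rw [show (fun y : sphere (0:E3) 1 => Mker (fun k => (y : E3) k) (fun k => f k) 0 1)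
        = (fun y : sphere (0:E3) 1 =>
          (-f 2/2) * ((y : E3) 0 * (y : E3) 0) + ((0:ℝ)) * ((y : E3) 0 * (y : E3) 1)
            + (f 0/2) * ((y : E3) 0 * (y : E3) 2) + (f 2/2) * ((y : E3) 1 * (y : E3) 1)
            + (-f 1/2) * ((y : E3) 1 * (y : E3) 2) + (0) * ((y : E3) 2 * (y : E3) 2)) from
      funext fun y => by simp [Mker, cross3]; ring, integral_quad]
    ring
  · show ∫ y : sphere (0:E3) 1,
        Mker (fun k => (y : E3) k) (fun k => f k) 0 2
        ∂(volume : Measure E3).toSphere = 0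
    rw [show (fun y : sphere (0:E3) 1 => Mker (fun k => (y : E3) k) (fun k => f k) 0 2)
        = (fun y : sphere (0:E3) 1 =>
          (f 1/2) * ((y : E3) 0 * (y : E3) 0) + (-f 0/2) * ((y : E3) 0 * (y : E3) 1)
            + ((0:ℝ)) * ((y : E3) 0 * (y : E3) 2) + (0) * ((y : E3) 1 * (y : E3) 1)
            + (f 2/2) * ((y : E3) 1 * (y : E3) 2) + (-f 1/2) * ((y : E3) 2 * (y : E3) 2)) from
      funext fun y => by simp [Mker, cross3]; ring, integral_quad]
    ring
  · show ∫ y : sphere (0:E3) 1,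
        Mker (fun k => (y : E3) k) (fun k => f k) 1 0
        ∂(volume : Measure E3).toSphere = 0
    rw [show (fun y : sphere (0:E3) 1 => Mker (fun k => (y : E3) k) (fun k => f k) 1 0)
        = (fun y : sphere (0:E3) 1 =>
          (-f 2/2) * ((y : E3) 0 * (y : E3) 0) + ((0:ℝ)) * ((y : E3) 0 * (y : E3) 1)
            + (f 0/2) * ((y : E3) 0 * (y : E3) 2) + (f 2/2) * ((y : E3) 1 * (y : E3) 1)
            + (-f 1/2) * ((y : E3) 1 * (y : E3) 2) + (0) * ((y : E3) 2 * (y : E3) 2)) from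
      funext fun y => by simp [Mker, cross3]; ring, integral_quad]
    ring
  · show ∫ y : sphere (0:E3) 1,
        Mker (fun k => (y : E3) k) (fun k => f k) 1 1
        ∂(volume : Measure E3).toSphere = 0
    rw [show (fun y : sphere (0:E3) 1 => Mker (fun k => (y : E3) k) (fun k => f k) 1 1)
        = (fun y : sphere (0:E3) 1 =>
          ((0:ℝ)) * ((y : E3) 0 * (y : E3) 0) + (-f 2) * ((y : E3) 0 * (y : E3) 1)
            + (0) * ((y : E3) 0 * (y : E3) 2) + (0) * ((y : E3) 1 * (y : E3) 1)
            + (f 0) * ((y : E3) 1 * (y : E3) 2) + (0) * ((y : E3) 2 * (y : E3) 2)) from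
      funext fun y => by simp [Mker, cross3]; ring, integral_quad]
    ring
  · show ∫ y : sphere (0:E3) 1,
        Mker (fun k => (y : E3) k) (fun k => f k) 1 2
        ∂(volume : Measure E3).toSphere = 0
    rw [show (fun y : sphere (0:E3) 1 => Mker (fun k => (y : E3) k) (fun k => f k) 1 2)
        = (fun y : sphere (0:E3) 1 =>
          ((0:ℝ)) * ((y : E3) 0 * (y : E3) 0) + (f 1/2) * ((y : E3) 0 * (y : E3) 1)
            + (-f 2/2) * ((y : E3) 0 * (y : E3) 2) + (-f 0/2) * ((y : E3) 1 * (y : E3) 1)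
            + (0) * ((y : E3) 1 * (y : E3) 2) + (f 0/2) * ((y : E3) 2 * (y : E3) 2)) from
      funext fun y => by simp [Mker, cross3]; ring, integral_quad]
    ring
  · show ∫ y : sphere (0:E3) 1,
        Mker (fun k => (y : E3) k) (fun k => f k) 2 0
        ∂(volume : Measure E3).toSphere = 0
    rw [show (fun y : sphere (0:E3) 1 => Mker (fun k => (y : E3) k) (fun k => f k) 2 0)
        = (fun y : sphere (0:E3) 1 =>
          (f 1/2) * ((y : E3) 0 * (y : E3) 0) + (-f 0/2) * ((y : E3) 0 * (y : E3) 1)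
            + ((0:ℝ)) * ((y : E3) 0 * (y : E3) 2) + (0) * ((y : E3) 1 * (y : E3) 1)
            + (f 2/2) * ((y : E3) 1 * (y : E3) 2) + (-f 1/2) * ((y : E3) 2 * (y : E3) 2)) from
      funext fun y => by simp [Mker, cross3]; ring, integral_quad]
    ring
  · show ∫ y : sphere (0:E3) 1,
        Mker (fun k => (y : E3) k) (fun k => f k) 2 1
        ∂(volume : Measure E3).toSphere = 0
    rw [show (fun y : sphere (0:E3) 1 => Mker (fun k => (y : E3) k) (fun k => f k) 2 1)
        = (fun y : sphere (0:E3) 1 =>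
          ((0:ℝ)) * ((y : E3) 0 * (y : E3) 0) + (f 1/2) * ((y : E3) 0 * (y : E3) 1)
            + (-f 2/2) * ((y : E3) 0 * (y : E3) 2) + (-f 0/2) * ((y : E3) 1 * (y : E3) 1)
            + (0) * ((y : E3) 1 * (y : E3) 2) + (f 0/2) * ((y : E3) 2 * (y : E3) 2)) from
      funext fun y => by simp [Mker, cross3]; ring, integral_quad]
    ring
  · show ∫ y : sphere (0:E3) 1,
        Mker (fun k => (y : E3) k) (fun k => f k) 2 2
        ∂(volume : Measure E3).toSphere = 0
    rw [show (fun y : sphere (0:E3) 1 => Mker (fun k => (y : E3) k) (fun k => f k) 2 2)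
        = (fun y : sphere (0:E3) 1 =>
          ((0:ℝ)) * ((y : E3) 0 * (y : E3) 0) + (0) * ((y : E3) 0 * (y : E3) 1)
            + (f 1) * ((y : E3) 0 * (y : E3) 2) + (0) * ((y : E3) 1 * (y : E3) 1)
            + (-f 0) * ((y : E3) 1 * (y : E3) 2) + (0) * ((y : E3) 2 * (y : E3) 2)) from
      funext fun y => by simp [Mker, cross3]; ring, integral_quad]
    ring

end
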